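/- arXiv:2110.06357 — 6 statements merged into one kernel-verified Lean document; each statement's English description precedes it below -/
import Mathlib

section
/- Let μ, ν be Borel probability measures on ℝ^D each supported in some ball of radius r. Then the operator norms of covariance matrices satisfy ‖Σ[μ] − Σ[ν]‖ ≤ 8r · W₁(μ, ν). -/
open MeasureTheory

/-- The `p`-Wasserstein distance between two Borel measures. -/
noncomputable def wassersteinDist {α : Type*} [MeasurableSpace α] [PseudoMetricSpace α]
    (p : ℝ) (μ ν : Measure α) : ℝ :=
  sInf { c | ∃ γ : Measure (α × α), γ.map Prod.fst = μ ∧ γ.map Prod.snd = ν ∧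
      c = (∫ z, dist z.1 z.2 ^ p ∂γ) ^ (1 / p) }

/-- The covariance matrix `E[(X - E X)(X - E X)ᵀ]` of a measure on `ℝ^D`. -/
noncomputable def covMatrix {D : ℕ} (μ : Measure (EuclideanSpace ℝ (Fin D))) :
    Matrix (Fin D) (Fin D) ℝ := fun i j =>
  ∫ x, (x i - (∫ y, y ∂μ) i) * (x j - (∫ y, y ∂μ) j) ∂μ

/-- The operator norm of a `D × D` real matrix, acting on Euclidean space. -/
noncomputable def matOpNorm {D : ℕ} (A : Matrix (Fin D) (Fin D) ℝ) : ℝ :=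
  ‖Matrix.toEuclideanCLM (𝕜 := ℝ) A‖

open scoped RealInnerProductSpace

lemma aux_clm_apply {D : ℕ} (A : Matrix (Fin D) (Fin D) ℝ) (v : EuclideanSpace ℝ (Fin D))
    (i : Fin D) : (Matrix.toEuclideanCLM (𝕜 := ℝ) A) v i = ∑ j, A i j * v j := rfl

lemma aux_abs_apply_le {D : ℕ} (w : EuclideanSpace ℝ (Fin D)) (i : Fin D) : |w i| ≤ ‖w‖ := by
  rw [EuclideanSpace.norm_eq]
  rw [show |w i| = Real.sqrt (|w i|^2) from (Real.sqrt_sq (abs_nonneg _)).symm]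
  apply Real.sqrt_le_sqrt
  rw [show |w i| ^ 2 = ‖w i‖^2 by rw [Real.norm_eq_abs]]
  exact Finset.single_le_sum (f := fun j => ‖w j‖^2) (fun j _ => by positivity) (Finset.mem_univ i)

lemma aux_integrable_of_ae_bound {α G : Type*} [MeasurableSpace α] [TopologicalSpace α]
    [OpensMeasurableSpace α] [NormedAddCommGroup G] [SecondCountableTopologyEither α G]
    {μ : Measure α} [IsFiniteMeasure μ]
    {f : α → G} (hf : Continuous f) {C : ℝ} (h : ∀ᵐ x ∂μ, ‖f x‖ ≤ C) : Integrable f μ :=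
  Integrable.mono' (integrable_const C) hf.aestronglyMeasurable h

lemma aux_inner_sum {D : ℕ} (u w : EuclideanSpace ℝ (Fin D)) : ⟪u, w⟫ = ∑ i, u i * w i := by
  simp [PiLp.inner_apply, RCLike.inner_apply]
  exact Finset.sum_congr rfl fun i _ => mul_comm _ _

/-- Mean facts: the identity is integrable and the measure is a.e. within `2r` of its mean. -/
lemma aux_mean_facts {D : ℕ} (r : ℝ) (μ : Measure (EuclideanSpace ℝ (Fin D)))
    [IsProbabilityMeasure μ] (c : EuclideanSpace ℝ (Fin D))
    (h : ∀ᵐ x ∂μ, x ∈ Metric.ball c r) :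
    Integrable (fun y => y) μ ∧ (∀ᵐ x ∂μ, ‖x - (∫ y, y ∂μ)‖ ≤ 2 * r) := by
  have hb : ∀ᵐ x ∂μ, ‖x‖ ≤ ‖c‖ + r := by
    filter_upwards [h] with x hx
    have hd : dist x c < r := Metric.mem_ball.mp hx
    calc ‖x‖ ≤ ‖c‖ + ‖x - c‖ := norm_le_insert' x c
      _ ≤ ‖c‖ + r := by rw [← dist_eq_norm]; linarith
  have hint : Integrable (fun y : EuclideanSpace ℝ (Fin D) => y) μ :=
    aux_integrable_of_ae_bound continuous_id hb
  refine ⟨hint, ?_⟩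
  have hmc : ‖(∫ y, y ∂μ) - c‖ ≤ r := by
    have he : (∫ y, y ∂μ) - c = ∫ y, (y - c) ∂μ := by
      rw [integral_sub hint (integrable_const c), integral_const, probReal_univ,
        one_smul]
    rw [he]
    have := norm_integral_le_of_norm_le_const (μ := μ)
      (f := fun y : EuclideanSpace ℝ (Fin D) => y - c) (C := r)
      (by filter_upwards [h] with x hx
          rw [← dist_eq_norm]; exact le_of_lt (Metric.mem_ball.mp hx))
    simpa [measure_univ] using this
  filter_upwards [h] with x hx
  have hxc : ‖x - c‖ ≤ r := by
    rw [← dist_eq_norm]; exact le_of_lt (Metric.mem_ball.mp hx)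
  calc ‖x - (∫ y, y ∂μ)‖ ≤ ‖x - c‖ + ‖c - (∫ y, y ∂μ)‖ := by
        rw [show x - (∫ y, y ∂μ) = (x - c) + (c - (∫ y, y ∂μ)) by abel]
        exact norm_add_le _ _
    _ ≤ r + r := by
        have h' : ‖c - (∫ y, y ∂μ)‖ = ‖(∫ y, y ∂μ) - c‖ := norm_sub_rev _ _
        linarith
    _ = 2 * r := by ring

/-- Bilinear representation of the covariance matrix. -/
lemma aux_cov_bilin {D : ℕ} (ρ : Measure (EuclideanSpace ℝ (Fin D))) [IsProbabilityMeasure ρ]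
    {R : ℝ} (hb : ∀ᵐ x ∂ρ, ‖x - (∫ y, y ∂ρ)‖ ≤ R) (u v : EuclideanSpace ℝ (Fin D)) :
    ∑ i, ∑ j, u i * covMatrix ρ i j * v j
      = ∫ x, ⟪u, x - (∫ y, y ∂ρ)⟫ * ⟪v, x - (∫ y, y ∂ρ)⟫ ∂ρ := by
  set m := ∫ y, y ∂ρ with hm
  have hone : ∀ i j : Fin D,
      Integrable (fun x : EuclideanSpace ℝ (Fin D) =>
        u i * ((x i - m i) * (x j - m j)) * v j) ρ := by
    intro i j
    apply aux_integrable_of_ae_bound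
    · exact (continuous_const.mul (((PiLp.continuous_apply 2 _ i).sub continuous_const).mul
        ((PiLp.continuous_apply 2 _ j).sub continuous_const))).mul continuous_const
    · filter_upwards [hb] with x hx
      have hi : |x i - m i| ≤ R := by
        have := aux_abs_apply_le (x - m) i
        simpa using this.trans hx
      have hj : |x j - m j| ≤ R := by
        have := aux_abs_apply_le (x - m) j
        simpa using this.trans hx
      have hR : 0 ≤ R := le_trans (abs_nonneg _) hi
      calc ‖u i * ((x i - m i) * (x j - m j)) * v j‖
          = |u i| * (|x i - m i| * |x j - m j|) * |v j| := by
            simp [Real.norm_eq_abs, abs_mul]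
        _ ≤ |u i| * (R * R) * |v j| := by
            apply mul_le_mul_of_nonneg_right _ (abs_nonneg _)
            apply mul_le_mul_of_nonneg_left _ (abs_nonneg _)
            exact mul_le_mul hi hj (abs_nonneg _) hR
  have hrw : ∀ i j : Fin D, u i * covMatrix ρ i j * v j
      = ∫ x, u i * ((x i - m i) * (x j - m j)) * v j ∂ρ := by
    intro i j
    rw [MeasureTheory.integral_mul_const, MeasureTheory.integral_const_mul]
    rfl
  calc ∑ i, ∑ j, u i * covMatrix ρ i j * v j
      = ∑ i, ∑ j, ∫ x, u i * ((x i - m i) * (x j - m j)) * v j ∂ρ :=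
        Finset.sum_congr rfl fun i _ => Finset.sum_congr rfl fun j _ => hrw i j
    _ = ∑ i, ∫ x, ∑ j, u i * ((x i - m i) * (x j - m j)) * v j ∂ρ :=
        Finset.sum_congr rfl fun i _ => (integral_finset_sum _ (fun j _ => hone i j)).symm
    _ = ∫ x, ∑ i, ∑ j, u i * ((x i - m i) * (x j - m j)) * v j ∂ρ :=
        (integral_finset_sum _ (fun i _ => integrable_finset_sum _ (fun j _ => hone i j))).symm
    _ = ∫ x, ⟪u, x - m⟫ * ⟪v, x - m⟫ ∂ρ := by
        apply integral_congr_ae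
        apply Filter.Eventually.of_forall
        intro x
        simp only [aux_inner_sum, Finset.sum_mul_sum, PiLp.sub_apply]
        exact Finset.sum_congr rfl fun i _ => Finset.sum_congr rfl fun j _ => by ring

lemma aux_abs_helper (a b c d t R ru rv : ℝ) (h1 : |a - c| ≤ ru * t) (h2 : |b| ≤ rv * R)
    (h3 : |c| ≤ ru * R) (h4 : |b - d| ≤ rv * t) :
    |a * b - c * d| ≤ 2 * (ru * rv * R * t) := by
  have key : a * b - c * d = (a - c) * b + c * (b - d) := by ring
  rw [key]
  calc |(a - c) * b + c * (b - d)| ≤ |(a - c) * b| + |c * (b - d)| := abs_add_le _ _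
    _ = |a - c| * |b| + |c| * |b - d| := by rw [abs_mul, abs_mul]
    _ ≤ (ru * t) * (rv * R) + (ru * R) * (rv * t) :=
        add_le_add (mul_le_mul h1 h2 (abs_nonneg _) (le_trans (abs_nonneg _) h1))
          (mul_le_mul h3 h4 (abs_nonneg _) (le_trans (abs_nonneg _) h3))
    _ = 2 * (ru * rv * R * t) := by ring

set_option maxHeartbeats 2000000 in
theorem stmt3 {D : ℕ} (r : ℝ) (μ ν : Measure (EuclideanSpace ℝ (Fin D)))
    [IsProbabilityMeasure μ] [IsProbabilityMeasure ν]
    (cμ cν : EuclideanSpace ℝ (Fin D))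
    (hμ : ∀ᵐ x ∂μ, x ∈ Metric.ball cμ r) (hν : ∀ᵐ y ∂ν, y ∈ Metric.ball cν r) :
    matOpNorm (covMatrix μ - covMatrix ν) ≤ 8 * r * wassersteinDist 1 μ ν := by
  classical
  have hr : 0 < r := by
    by_contra h
    push_neg at h
    rw [Metric.ball_eq_empty.2 h] at hμ
    simp only [Set.mem_empty_iff_false] at hμ
    have h0 : μ Set.univ = 0 := by simpa [Filter.eventually_iff, mem_ae_iff] using hμ
    rw [measure_univ] at h0
    exact one_ne_zero h0
  obtain ⟨hintμ, hμm⟩ := aux_mean_facts r μ cμ hμ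
  obtain ⟨hintν, hνn⟩ := aux_mean_facts r ν cν hν
  set m := ∫ y, y ∂μ with hm
  set n := ∫ y, y ∂ν with hn
  set M := covMatrix μ - covMatrix ν with hM
  -- the key estimate for any coupling
  have key : ∀ γ : Measure (EuclideanSpace ℝ (Fin D) × EuclideanSpace ℝ (Fin D)),
      γ.map Prod.fst = μ → γ.map Prod.snd = ν →
      matOpNorm M ≤ 8 * r * ∫ z, dist z.1 z.2 ∂γ := by
    intro γ hγ1 hγ2
    haveI : IsProbabilityMeasure γ := by
      constructor
      have h := congrArg (fun ρ : Measure (EuclideanSpace ℝ (Fin D)) => ρ Set.univ) hγ1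
      simpa [Measure.map_apply measurable_fst MeasurableSet.univ, measure_univ] using h
    have hXball : ∀ᵐ z ∂γ, z.1 ∈ Metric.ball cμ r := by
      have h := hμ; rw [← hγ1] at h
      exact ae_of_ae_map measurable_fst.aemeasurable h
    have hYball : ∀ᵐ z ∂γ, z.2 ∈ Metric.ball cν r := by
      have h := hν; rw [← hγ2] at h
      exact ae_of_ae_map measurable_snd.aemeasurable h
    have hXm : ∀ᵐ z ∂γ, ‖z.1 - m‖ ≤ 2 * r := by
      have h := hμm; rw [← hγ1] at h
      exact ae_of_ae_map measurable_fst.aemeasurable h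
    have hYn : ∀ᵐ z ∂γ, ‖z.2 - n‖ ≤ 2 * r := by
      have h := hνn; rw [← hγ2] at h
      exact ae_of_ae_map measurable_snd.aemeasurable h
    have hdist_cont : Continuous
        fun z : EuclideanSpace ℝ (Fin D) × EuclideanSpace ℝ (Fin D) => dist z.1 z.2 :=
      continuous_fst.dist continuous_snd
    have hIdist : Integrable
        (fun z : EuclideanSpace ℝ (Fin D) × EuclideanSpace ℝ (Fin D) => dist z.1 z.2) γ := by
      apply aux_integrable_of_ae_bound hdist_cont (C := 2 * r + dist cμ cν)
      filter_upwards [hXball, hYball] with z h1 h2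
      rw [Real.norm_eq_abs, abs_of_nonneg dist_nonneg]
      have h1' : dist z.1 cμ < r := Metric.mem_ball.mp h1
      have h2' : dist cν z.2 < r := by rw [dist_comm]; exact Metric.mem_ball.mp h2
      have := dist_triangle4 z.1 cμ cν z.2
      linarith
    set I := ∫ z, dist z.1 z.2 ∂γ with hI
    have hI0 : 0 ≤ I := integral_nonneg fun z => dist_nonneg
    have hXint : Integrable
        (fun z : EuclideanSpace ℝ (Fin D) × EuclideanSpace ℝ (Fin D) => z.1) γ := by
      apply aux_integrable_of_ae_bound continuous_fst (C := ‖cμ‖ + r)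
      filter_upwards [hXball] with z hz
      have hd : dist z.1 cμ < r := Metric.mem_ball.mp hz
      calc ‖z.1‖ ≤ ‖cμ‖ + ‖z.1 - cμ‖ := norm_le_insert' _ _
        _ ≤ ‖cμ‖ + r := by rw [← dist_eq_norm]; linarith
    have hYint : Integrable
        (fun z : EuclideanSpace ℝ (Fin D) × EuclideanSpace ℝ (Fin D) => z.2) γ := by
      apply aux_integrable_of_ae_bound continuous_snd (C := ‖cν‖ + r)
      filter_upwards [hYball] with z hz
      have hd : dist z.2 cν < r := Metric.mem_ball.mp hz
      calc ‖z.2‖ ≤ ‖cν‖ + ‖z.2 - cν‖ := norm_le_insert' _ _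
        _ ≤ ‖cν‖ + r := by rw [← dist_eq_norm]; linarith
    have hm' : m = ∫ z, z.1 ∂γ := by
      rw [hm, ← hγ1]
      exact integral_map measurable_fst.aemeasurable aestronglyMeasurable_id
    have hn' : n = ∫ z, z.2 ∂γ := by
      rw [hn, ← hγ2]
      exact integral_map measurable_snd.aemeasurable aestronglyMeasurable_id
    have hmn : ‖m - n‖ ≤ I := by
      rw [hm', hn', ← integral_sub hXint hYint]
      calc ‖∫ z, (z.1 - z.2) ∂γ‖ ≤ ∫ z, ‖z.1 - z.2‖ ∂γ := norm_integral_le_integral_norm _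
        _ = I := by rw [hI]; simp only [dist_eq_norm]
    -- the bilinear estimate
    have hbil : ∀ u v : EuclideanSpace ℝ (Fin D),
        |⟪u, (Matrix.toEuclideanCLM (𝕜 := ℝ) M) v⟫| ≤ 8 * r * I * (‖u‖ * ‖v‖) := by
      intro u v
      have hf1cont : Continuous
          fun z : EuclideanSpace ℝ (Fin D) × EuclideanSpace ℝ (Fin D) =>
            ⟪u, z.1 - m⟫ * ⟪v, z.1 - m⟫ :=
        (continuous_const.inner (continuous_fst.sub continuous_const)).mul
          (continuous_const.inner (continuous_fst.sub continuous_const))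
      have hf2cont : Continuous
          fun z : EuclideanSpace ℝ (Fin D) × EuclideanSpace ℝ (Fin D) =>
            ⟪u, z.2 - n⟫ * ⟪v, z.2 - n⟫ :=
        (continuous_const.inner (continuous_snd.sub continuous_const)).mul
          (continuous_const.inner (continuous_snd.sub continuous_const))
      have hf1int : Integrable
          (fun z : EuclideanSpace ℝ (Fin D) × EuclideanSpace ℝ (Fin D) =>
            ⟪u, z.1 - m⟫ * ⟪v, z.1 - m⟫) γ := by
        apply aux_integrable_of_ae_bound hf1cont (C := (‖u‖ * (2*r)) * (‖v‖ * (2*r)))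
        filter_upwards [hXm] with z hz
        rw [Real.norm_eq_abs, abs_mul]
        exact mul_le_mul
          ((abs_real_inner_le_norm _ _).trans (mul_le_mul_of_nonneg_left hz (norm_nonneg u)))
          ((abs_real_inner_le_norm _ _).trans (mul_le_mul_of_nonneg_left hz (norm_nonneg v)))
          (abs_nonneg _) (by positivity)
      have hf2int : Integrable
          (fun z : EuclideanSpace ℝ (Fin D) × EuclideanSpace ℝ (Fin D) =>
            ⟪u, z.2 - n⟫ * ⟪v, z.2 - n⟫) γ := by
        apply aux_integrable_of_ae_bound hf2cont (C := (‖u‖ * (2*r)) * (‖v‖ * (2*r)))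
        filter_upwards [hYn] with z hz
        rw [Real.norm_eq_abs, abs_mul]
        exact mul_le_mul
          ((abs_real_inner_le_norm _ _).trans (mul_le_mul_of_nonneg_left hz (norm_nonneg u)))
          ((abs_real_inner_le_norm _ _).trans (mul_le_mul_of_nonneg_left hz (norm_nonneg v)))
          (abs_nonneg _) (by positivity)
      -- the inner product as an integral
      have hrepr : ⟪u, (Matrix.toEuclideanCLM (𝕜 := ℝ) M) v⟫ =
          ∫ z, (⟪u, z.1 - m⟫ * ⟪v, z.1 - m⟫ - ⟪u, z.2 - n⟫ * ⟪v, z.2 - n⟫) ∂γ := by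
        have h1 : ⟪u, (Matrix.toEuclideanCLM (𝕜 := ℝ) M) v⟫
            = ∑ i, ∑ j, u i * M i j * v j := by
          rw [aux_inner_sum]
          refine Finset.sum_congr rfl fun i _ => ?_
          rw [aux_clm_apply, Finset.mul_sum]
          exact Finset.sum_congr rfl fun j _ => by ring
        have h2 : (∑ i, ∑ j, u i * M i j * v j)
            = (∑ i, ∑ j, u i * covMatrix μ i j * v j)
              - (∑ i, ∑ j, u i * covMatrix ν i j * v j) := by
          rw [← Finset.sum_sub_distrib]
          refine Finset.sum_congr rfl fun i _ => ?_
          rw [← Finset.sum_sub_distrib]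
          refine Finset.sum_congr rfl fun j _ => ?_
          rw [hM]
          simp only [Matrix.sub_apply]
          ring
        have h3 := aux_cov_bilin μ hμm u v
        have h4 := aux_cov_bilin ν hνn u v
        rw [h1, h2, h3, h4, ← hm, ← hn]
        have h5 : ∫ x, ⟪u, x - m⟫ * ⟪v, x - m⟫ ∂μ
            = ∫ z, ⟪u, z.1 - m⟫ * ⟪v, z.1 - m⟫ ∂γ := by
          rw [← hγ1, integral_map measurable_fst.aemeasurable]
          exact Continuous.aestronglyMeasurable
            ((continuous_const.inner (continuous_id.sub continuous_const)).mul
              (continuous_const.inner (continuous_id.sub continuous_const)))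
        have h6 : ∫ x, ⟪u, x - n⟫ * ⟪v, x - n⟫ ∂ν
            = ∫ z, ⟪u, z.2 - n⟫ * ⟪v, z.2 - n⟫ ∂γ := by
          rw [← hγ2, integral_map measurable_snd.aemeasurable]
          exact Continuous.aestronglyMeasurable
            ((continuous_const.inner (continuous_id.sub continuous_const)).mul
              (continuous_const.inner (continuous_id.sub continuous_const)))
        rw [h5, h6, integral_sub hf1int hf2int]
      -- pointwise bound
      have hbound : ∀ᵐ z ∂γ,
          ‖⟪u, z.1 - m⟫ * ⟪v, z.1 - m⟫ - ⟪u, z.2 - n⟫ * ⟪v, z.2 - n⟫‖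
          ≤ 4 * r * ‖u‖ * ‖v‖ * dist z.1 z.2 + 4 * r * ‖u‖ * ‖v‖ * I := by
        filter_upwards [hXm, hYn] with z h1 h2
        rw [Real.norm_eq_abs]
        have hdiff : ‖(z.1 - m) - (z.2 - n)‖ ≤ dist z.1 z.2 + I := by
          calc ‖(z.1 - m) - (z.2 - n)‖ = ‖(z.1 - z.2) - (m - n)‖ := by
                rw [show (z.1 - m) - (z.2 - n) = (z.1 - z.2) - (m - n) by abel]
            _ ≤ ‖z.1 - z.2‖ + ‖m - n‖ := norm_sub_le _ _
            _ ≤ dist z.1 z.2 + I := by rw [← dist_eq_norm]; linarith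
        have hA : |⟪u, z.1 - m⟫ - ⟪u, z.2 - n⟫| ≤ ‖u‖ * (dist z.1 z.2 + I) := by
          rw [← inner_sub_right]
          exact (abs_real_inner_le_norm _ _).trans
            (mul_le_mul_of_nonneg_left hdiff (norm_nonneg u))
        have hB : |⟪v, z.1 - m⟫| ≤ ‖v‖ * (2 * r) :=
          (abs_real_inner_le_norm _ _).trans
            (mul_le_mul_of_nonneg_left h1 (norm_nonneg v))
        have hC : |⟪u, z.2 - n⟫| ≤ ‖u‖ * (2 * r) :=
          (abs_real_inner_le_norm _ _).trans
            (mul_le_mul_of_nonneg_left h2 (norm_nonneg u))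
        have hD : |⟪v, z.1 - m⟫ - ⟪v, z.2 - n⟫| ≤ ‖v‖ * (dist z.1 z.2 + I) := by
          rw [← inner_sub_right]
          exact (abs_real_inner_le_norm _ _).trans
            (mul_le_mul_of_nonneg_left hdiff (norm_nonneg v))
        have hh := aux_abs_helper _ _ _ _ (dist z.1 z.2 + I) (2 * r) ‖u‖ ‖v‖ hA hB hC hD
        exact hh.trans (le_of_eq (by ring))
      have hgint : Integrable
          (fun z : EuclideanSpace ℝ (Fin D) × EuclideanSpace ℝ (Fin D) =>
            4 * r * ‖u‖ * ‖v‖ * dist z.1 z.2 + 4 * r * ‖u‖ * ‖v‖ * I) γ :=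
        (hIdist.const_mul _).add (integrable_const _)
      have hnb := norm_integral_le_of_norm_le hgint hbound
      have hgeval : ∫ z, (4 * r * ‖u‖ * ‖v‖ * dist z.1 z.2 + 4 * r * ‖u‖ * ‖v‖ * I) ∂γ
          = 8 * r * I * (‖u‖ * ‖v‖) := by
        rw [integral_add (hIdist.const_mul _) (integrable_const _), MeasureTheory.integral_const_mul,
          integral_const, probReal_univ, one_smul, ← hI]
        ring
      rw [hrepr, ← Real.norm_eq_abs]
      exact hnb.trans (le_of_eq hgeval)
    -- conclude the operator norm bound
    show ‖Matrix.toEuclideanCLM (𝕜 := ℝ) M‖ ≤ 8 * r * I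
    apply ContinuousLinearMap.opNorm_le_bound _ (by nlinarith [hI0, hr.le] : (0:ℝ) ≤ 8 * r * I)
    intro v
    set T := Matrix.toEuclideanCLM (𝕜 := ℝ) M with hT
    rcases eq_or_lt_of_le (norm_nonneg (T v)) with h0 | h0
    · rw [← h0]
      have h4 : (0:ℝ) ≤ 8 * r * I := by nlinarith [hI0, hr.le]
      exact mul_nonneg h4 (norm_nonneg v)
    · have h2 := (abs_le.mp (hbil (T v) v)).2
      rw [real_inner_self_eq_norm_mul_norm] at h2
      have h3 : ‖T v‖ * ‖T v‖ ≤ (8 * r * I * ‖v‖) * ‖T v‖ := by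
        calc ‖T v‖ * ‖T v‖ ≤ 8 * r * I * (‖T v‖ * ‖v‖) := h2
          _ = (8 * r * I * ‖v‖) * ‖T v‖ := by ring
      exact le_of_mul_le_mul_right h3 h0
  -- use the definition of the Wasserstein distance
  have hne : { c | ∃ γ : Measure (EuclideanSpace ℝ (Fin D) × EuclideanSpace ℝ (Fin D)),
      γ.map Prod.fst = μ ∧ γ.map Prod.snd = ν ∧
      c = (∫ z, dist z.1 z.2 ^ (1:ℝ) ∂γ) ^ (1 / (1:ℝ)) }.Nonempty := by
    refine ⟨_, μ.prod ν, ?_, ?_, rfl⟩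
    · simp [Measure.map_fst_prod, measure_univ]
    · simp [Measure.map_snd_prod, measure_univ]
  have h8r : (0:ℝ) < 8 * r := by linarith
  have hmain : matOpNorm M / (8 * r) ≤ wassersteinDist 1 μ ν := by
    apply le_csInf hne
    rintro c ⟨γ, h1, h2, rfl⟩
    have hk := key γ h1 h2
    have hsimp : (∫ z, dist z.1 z.2 ^ (1:ℝ) ∂γ) ^ ((1:ℝ) / (1:ℝ))
        = ∫ z, dist z.1 z.2 ∂γ := by
      rw [show (1:ℝ)/(1:ℝ) = 1 by norm_num, Real.rpow_one]
      congr 1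
      funext z
      rw [Real.rpow_one]
    rw [show (1:ℝ)/(1:ℝ) = 1 / (1:ℝ) by norm_num] at hsimp
    rw [hsimp, div_le_iff₀ h8r]
    linarith
  rw [div_le_iff₀ h8r] at hmain
  linarith
end

section
/- Let Y₁, …, Y_m be independent ℝ^D-valued random vectors with E[Y_i] = 0 and ‖Y_i‖ ≤ α_i almost surely. Write σ² = Σᵢ αᵢ². Then for every ε ≥ 0, P(‖Y₁ + ⋯ + Y_m‖ ≥ ε) ≤ 2(D+1)·exp(−ε²/(8σ²)). -/
open MeasureTheory ProbabilityTheory Finset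


lemma coshSqrtConvex {u v a b : ℝ} (hu : 0 ≤ u) (hv : 0 ≤ v) (ha : 0 ≤ a) (hb : 0 ≤ b)
    (hab : a + b = 1) :
    Real.cosh (Real.sqrt (a * u + b * v)) ≤
      a * Real.cosh (Real.sqrt u) + b * Real.cosh (Real.sqrt v) := by
  have key : ∀ w : ℝ, 0 ≤ w →
      HasSum (fun n : ℕ => w ^ n / (2 * n).factorial) (Real.cosh (Real.sqrt w)) := by
    intro w hw
    have h := Real.hasSum_cosh (Real.sqrt w)
    convert h using 2 with n
    rw [pow_mul, Real.sq_sqrt hw]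
  have hcomb : 0 ≤ a * u + b * v := by positivity
  refine hasSum_le (fun n => ?_) (key _ hcomb)
    (((key u hu).mul_left a).add ((key v hv).mul_left b))
  have hpow := (convexOn_pow (𝕜 := ℝ) n).2 (Set.mem_Ici.2 hu) (Set.mem_Ici.2 hv) ha hb hab
  simp only [smul_eq_mul] at hpow
  have hfact : (0:ℝ) < ((2 * n).factorial : ℝ) := by positivity
  calc (a * u + b * v) ^ n / ((2 * n).factorial : ℝ)
      ≤ (a * u ^ n + b * v ^ n) / ((2 * n).factorial : ℝ) := by gcongr
    _ = a * (u ^ n / ((2 * n).factorial : ℝ)) + b * (v ^ n / ((2 * n).factorial : ℝ)) := by ring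

lemma coshStar {c β s : ℝ} (hc : 0 ≤ c) (hβ : 0 ≤ β) (hs1 : -1 ≤ s) (hs2 : s ≤ 1) :
    Real.cosh (Real.sqrt (c ^ 2 + β ^ 2 + 2 * c * β * s)) ≤
      Real.cosh c * Real.cosh β + s * (Real.sinh c * Real.sinh β) := by
  have ha : 0 ≤ (1 + s) / 2 := by linarith
  have hb : 0 ≤ (1 - s) / 2 := by linarith
  have hab : (1 + s) / 2 + (1 - s) / 2 = 1 := by ring
  have h := coshSqrtConvex (u := (c + β) ^ 2) (v := (c - β) ^ 2) (by positivity) (by positivity)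
    ha hb hab
  rw [Real.sqrt_sq (by linarith), Real.sqrt_sq_eq_abs, Real.cosh_abs] at h
  have harg : (1 + s) / 2 * (c + β) ^ 2 + (1 - s) / 2 * (c - β) ^ 2
      = c ^ 2 + β ^ 2 + 2 * c * β * s := by ring
  rw [harg] at h
  refine h.trans (le_of_eq ?_)
  rw [Real.cosh_add, Real.cosh_sub]
  ring

lemma coshPointwise {F : Type*} [NormedAddCommGroup F] [InnerProductSpace ℝ F]
    (t α : ℝ) (ht : 0 ≤ t) (a y : F) (hy : ‖y‖ ≤ α) :
    Real.cosh (t * ‖a + y‖) ≤ Real.cosh (t * ‖a‖) * Real.cosh (t * α)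
      + (inner ℝ a y : ℝ) * (if ‖a‖ * α = 0 then 0 else
          Real.sinh (t * ‖a‖) * Real.sinh (t * α) / (‖a‖ * α)) := by
  have hα : 0 ≤ α := (norm_nonneg y).trans hy
  by_cases h0 : ‖a‖ * α = 0
  · rw [if_pos h0, mul_zero, add_zero]
    rcases mul_eq_zero.1 h0 with h | h
    · have ha : a = 0 := norm_eq_zero.1 h
      subst ha
      rw [zero_add, norm_zero, mul_zero, Real.cosh_zero, one_mul]
      rw [Real.cosh_le_cosh, abs_of_nonneg (by positivity), abs_of_nonneg (by positivity)]
      exact mul_le_mul_of_nonneg_left hy ht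
    · have hy0 : y = 0 := norm_eq_zero.1 (le_antisymm (hy.trans h.le) (norm_nonneg y))
      subst hy0
      rw [add_zero, h, mul_zero, Real.cosh_zero, mul_one]
  · rw [if_neg h0]
    have ha : 0 < ‖a‖ := (norm_nonneg a).lt_of_ne' (fun h => h0 (by rw [h, zero_mul]))
    have hαpos : 0 < α := hα.lt_of_ne' (fun h => h0 (by rw [h, mul_zero]))
    set s : ℝ := (inner ℝ a y : ℝ) / (‖a‖ * α) with hs_def
    have hsabs : |s| ≤ 1 := by
      rw [abs_div, abs_of_pos (mul_pos ha hαpos), div_le_one (mul_pos ha hαpos)]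
      exact (abs_real_inner_le_norm a y).trans (mul_le_mul_of_nonneg_left hy ha.le)
    have hs1 : -1 ≤ s := (abs_le.1 hsabs).1
    have hs2 : s ≤ 1 := (abs_le.1 hsabs).2
    have hcs : 2 * (t * ‖a‖) * (t * α) * s = 2 * t ^ 2 * (inner ℝ a y : ℝ) := by
      rw [hs_def]; field_simp
    have step1 : t * ‖a + y‖ ≤ Real.sqrt ((t * ‖a‖) ^ 2 + (t * α) ^ 2 + 2 * (t * ‖a‖) * (t * α) * s) := by
      rw [show (t * ‖a‖) ^ 2 + (t * α) ^ 2 + 2 * (t * ‖a‖) * (t * α) * s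
          = (t * ‖a‖) ^ 2 + (t * α) ^ 2 + 2 * t ^ 2 * (inner ℝ a y : ℝ) from by rw [hcs]]
      rw [show t * ‖a + y‖ = Real.sqrt ((t * ‖a + y‖) ^ 2) from (Real.sqrt_sq (by positivity)).symm]
      apply Real.sqrt_le_sqrt
      have hexp := norm_add_sq_real a y
      have hyy : ‖y‖ ^ 2 ≤ α ^ 2 := by nlinarith [norm_nonneg y]
      nlinarith [sq_nonneg t]
    have step2 : Real.cosh (t * ‖a + y‖) ≤
        Real.cosh (Real.sqrt ((t * ‖a‖) ^ 2 + (t * α) ^ 2 + 2 * (t * ‖a‖) * (t * α) * s)) := by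
      rw [Real.cosh_le_cosh, abs_of_nonneg (by positivity), abs_of_nonneg (Real.sqrt_nonneg _)]
      exact step1
    refine step2.trans ((coshStar (by positivity) (by positivity) hs1 hs2).trans (le_of_eq ?_))
    rw [hs_def]
    field_simp

lemma coshStep {Ω : Type*} [MeasureSpace Ω] [IsProbabilityMeasure (ℙ : Measure Ω)]
    {D : ℕ} (X Z : Ω → EuclideanSpace ℝ (Fin D)) (hX : Measurable X) (hZ : Measurable Z)
    (hind : IndepFun X Z) (A α t : ℝ) (ht : 0 ≤ t)
    (hA : ∀ᵐ ω ∂ℙ, ‖X ω‖ ≤ A) (hαb : ∀ᵐ ω ∂ℙ, ‖Z ω‖ ≤ α)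
    (hZmean : ∫ ω, Z ω = 0) :
    ∫ ω, Real.cosh (t * ‖X ω + Z ω‖) ≤ (∫ ω, Real.cosh (t * ‖X ω‖)) * Real.cosh (t * α) := by
  have hα0 : 0 ≤ α := by
    obtain ⟨ω, hω⟩ := hαb.exists
    exact (norm_nonneg _).trans hω
  have hA0 : 0 ≤ A := by
    obtain ⟨ω, hω⟩ := hA.exists
    exact (norm_nonneg _).trans hω
  rcases hα0.eq_or_lt with hαz | hαpos
  · -- α = 0 : Z = 0 a.e.
    have hZ0 : ∀ᵐ ω ∂ℙ, Z ω = 0 := by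
      filter_upwards [hαb] with ω h
      exact norm_eq_zero.1 (le_antisymm (hαz ▸ h) (norm_nonneg _))
    have hcongr : (fun ω => Real.cosh (t * ‖X ω + Z ω‖))
        =ᵐ[ℙ] fun ω => Real.cosh (t * ‖X ω‖) := by
      filter_upwards [hZ0] with ω h
      rw [h, add_zero]
    rw [integral_congr_ae hcongr, ← hαz, mul_zero, Real.cosh_zero, mul_one]
  · -- main case
    set K : EuclideanSpace ℝ (Fin D) → ℝ := fun x => if ‖x‖ * α = 0 then 0 else
      Real.sinh (t * ‖x‖) * Real.sinh (t * α) / (‖x‖ * α) with hK_def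
    set ψ : EuclideanSpace ℝ (Fin D) → EuclideanSpace ℝ (Fin D) := fun x => K x • x with hψ_def
    have hsinh_nonneg : ∀ r : ℝ, 0 ≤ r → 0 ≤ Real.sinh r := fun r hr => by
      rw [← Real.sinh_zero]
      exact Real.sinh_le_sinh.2 hr
    have hKnonneg : ∀ x : EuclideanSpace ℝ (Fin D), 0 ≤ K x := by
      intro x
      rw [hK_def]
      dsimp only
      split
      · exact le_refl 0
      · apply div_nonneg
        · exact mul_nonneg (hsinh_nonneg _ (mul_nonneg ht (norm_nonneg _)))
            (hsinh_nonneg _ (mul_nonneg ht hα0))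
        · exact mul_nonneg (norm_nonneg _) hα0
    have hKm : Measurable K := by
      apply Measurable.ite
      · exact (measurable_norm.mul_const α) (measurableSet_singleton 0)
      · exact measurable_const
      · exact ((Real.continuous_sinh.measurable.comp (measurable_norm.const_mul t)).mul
          measurable_const).div (measurable_norm.mul_const α)
    have hψm : Measurable ψ := hKm.smul measurable_id
    set C : ℝ := Real.sinh (t * A) * Real.sinh (t * α) / α with hC_def
    have hC0 : 0 ≤ C := div_nonneg (mul_nonneg (hsinh_nonneg _ (mul_nonneg ht hA0))
      (hsinh_nonneg _ (mul_nonneg ht hα0))) hα0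
    have hψbound : ∀ x : EuclideanSpace ℝ (Fin D), ‖x‖ ≤ A → ‖ψ x‖ ≤ C := by
      intro x hx
      rw [hψ_def]
      dsimp only
      rw [norm_smul, Real.norm_eq_abs, abs_of_nonneg (hKnonneg x)]
      rw [hK_def]
      dsimp only
      split_ifs with h0
      · rw [zero_mul]; exact hC0
      · have hxpos : 0 < ‖x‖ := (norm_nonneg x).lt_of_ne' fun h => h0 (by rw [h, zero_mul])
        rw [div_mul_eq_mul_div, hC_def]
        rw [show Real.sinh (t * ‖x‖) * Real.sinh (t * α) * ‖x‖ / (‖x‖ * α)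
            = Real.sinh (t * ‖x‖) * Real.sinh (t * α) / α from by field_simp]
        gcongr
        exact Real.sinh_le_sinh.2 (mul_le_mul_of_nonneg_left hx ht)
    -- a.e. pointwise inequality
    have haeineq : ∀ᵐ ω ∂ℙ, Real.cosh (t * ‖X ω + Z ω‖) ≤
        Real.cosh (t * ‖X ω‖) * Real.cosh (t * α) + (inner ℝ (ψ (X ω)) (Z ω) : ℝ) := by
      filter_upwards [hαb] with ω hω
      have h := coshPointwise t α ht (X ω) (Z ω) hω
      have hrw : (inner ℝ (ψ (X ω)) (Z ω) : ℝ) = (inner ℝ (X ω) (Z ω) : ℝ) * K (X ω) := by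
        rw [hψ_def]
        dsimp only
        rw [real_inner_smul_left]
        ring
      rw [hrw]
      exact h
    -- integrability
    have hmeas1 : Measurable fun ω => Real.cosh (t * ‖X ω + Z ω‖) :=
      Real.continuous_cosh.measurable.comp ((hX.add hZ).norm.const_mul t)
    have int1 : Integrable (fun ω => Real.cosh (t * ‖X ω + Z ω‖)) ℙ := by
      refine Integrable.mono' (integrable_const (Real.cosh (t * (A + α))))
        hmeas1.aestronglyMeasurable ?_
      filter_upwards [hA, hαb] with ω h1 h2
      rw [Real.norm_eq_abs, abs_of_pos (Real.cosh_pos _), Real.cosh_le_cosh,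
        abs_of_nonneg (mul_nonneg ht (norm_nonneg _)),
        abs_of_nonneg (mul_nonneg ht (add_nonneg hA0 hα0))]
      exact mul_le_mul_of_nonneg_left ((norm_add_le _ _).trans (add_le_add h1 h2)) ht
    have hmeas2 : Measurable fun ω => Real.cosh (t * ‖X ω‖) :=
      Real.continuous_cosh.measurable.comp (hX.norm.const_mul t)
    have int2 : Integrable (fun ω => Real.cosh (t * ‖X ω‖)) ℙ := by
      refine Integrable.mono' (integrable_const (Real.cosh (t * A)))
        hmeas2.aestronglyMeasurable ?_
      filter_upwards [hA] with ω h1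
      rw [Real.norm_eq_abs, abs_of_pos (Real.cosh_pos _), Real.cosh_le_cosh,
        abs_of_nonneg (mul_nonneg ht (norm_nonneg _)),
        abs_of_nonneg (mul_nonneg ht hA0)]
      exact mul_le_mul_of_nonneg_left h1 ht
    have hψX : Measurable fun ω => ψ (X ω) := hψm.comp hX
    have hψXint : Integrable (fun ω => ψ (X ω)) ℙ := by
      refine Integrable.mono' (integrable_const C) hψX.aestronglyMeasurable ?_
      filter_upwards [hA] with ω h1
      exact hψbound _ h1
    have hZint : Integrable Z ℙ := by
      refine Integrable.mono' (integrable_const α) hZ.aestronglyMeasurable ?_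
      filter_upwards [hαb] with ω h
      exact h
    have hinnerm : Measurable fun ω => (inner ℝ (ψ (X ω)) (Z ω) : ℝ) := hψX.inner hZ
    have int3 : Integrable (fun ω => (inner ℝ (ψ (X ω)) (Z ω) : ℝ)) ℙ := by
      refine Integrable.mono' (integrable_const (C * α)) hinnerm.aestronglyMeasurable ?_
      filter_upwards [hA, hαb] with ω h1 h2
      rw [Real.norm_eq_abs]
      exact (abs_real_inner_le_norm _ _).trans
        (mul_le_mul (hψbound _ h1) h2 (norm_nonneg _) hC0)
    -- the inner product has zero integral
    have hEzero : ∫ ω, (inner ℝ (ψ (X ω)) (Z ω) : ℝ) = 0 := by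
      have hco : ∀ ω, (inner ℝ (ψ (X ω)) (Z ω) : ℝ) = ∑ j, (ψ (X ω)) j * (Z ω) j := by
        intro ω
        rw [PiLp.inner_apply]
        congr 1
        ext i; rw [RCLike.inner_apply, conj_trivial, mul_comm]
      have intψj : ∀ j, Integrable (fun ω => (ψ (X ω)) j) ℙ := by
        intro j
        have := (EuclideanSpace.proj (𝕜 := ℝ) j).integrable_comp hψXint
        simpa [PiLp.proj_apply] using this
      have intZj : ∀ j, Integrable (fun ω => (Z ω) j) ℙ := by
        intro j
        have := (EuclideanSpace.proj (𝕜 := ℝ) j).integrable_comp hZint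
        simpa [PiLp.proj_apply] using this
      have hindj : ∀ j, IndepFun (fun ω => (ψ (X ω)) j) (fun ω => (Z ω) j) ℙ := by
        intro j
        exact hind.comp ((EuclideanSpace.proj (𝕜 := ℝ) j).measurable.comp hψm) (EuclideanSpace.proj (𝕜 := ℝ) j).measurable
      have hZjzero : ∀ j, ∫ ω, (Z ω) j = 0 := by
        intro j
        have := (EuclideanSpace.proj (𝕜 := ℝ) j).integral_comp_comm hZint
        simp only [PiLp.proj_apply] at this
        rw [this, hZmean]
        rfl
      calc ∫ ω, (inner ℝ (ψ (X ω)) (Z ω) : ℝ) = ∫ ω, ∑ j, (ψ (X ω)) j * (Z ω) j := by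
            exact integral_congr_ae (Filter.Eventually.of_forall hco)
        _ = ∑ j, ∫ ω, (ψ (X ω)) j * (Z ω) j := by
            refine integral_finset_sum _ fun j _ => ?_
            exact (hindj j).integrable_mul (intψj j) (intZj j)
        _ = ∑ j, (∫ ω, (ψ (X ω)) j) * (∫ ω, (Z ω) j) := by
            refine Finset.sum_congr rfl fun j _ => ?_
            exact (hindj j).integral_fun_mul_eq_mul_integral (intψj j).aestronglyMeasurable (intZj j).aestronglyMeasurable
        _ = 0 := by
            refine Finset.sum_eq_zero fun j _ => ?_
            rw [hZjzero j, mul_zero]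
    calc ∫ ω, Real.cosh (t * ‖X ω + Z ω‖)
        ≤ ∫ ω, (Real.cosh (t * ‖X ω‖) * Real.cosh (t * α) + (inner ℝ (ψ (X ω)) (Z ω) : ℝ)) :=
          integral_mono_ae int1 ((int2.mul_const _).add int3) haeineq
      _ = (∫ ω, Real.cosh (t * ‖X ω‖)) * Real.cosh (t * α) := by
          rw [integral_add (int2.mul_const _) int3, integral_mul_const, hEzero, add_zero]

lemma coshSumBound {Ω : Type*} [MeasureSpace Ω] [IsProbabilityMeasure (ℙ : Measure Ω)]
    {D m : ℕ} (Y : Fin m → Ω → EuclideanSpace ℝ (Fin D)) (hmeas : ∀ i, Measurable (Y i))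
    (hindep : iIndepFun Y) (hmean : ∀ i, ∫ ω, Y i ω = 0)
    (α : Fin m → ℝ) (hbdd : ∀ i, ∀ᵐ ω ∂ℙ, ‖Y i ω‖ ≤ α i) (t : ℝ) (ht : 0 ≤ t)
    (s : Finset (Fin m)) :
    ∫ ω, Real.cosh (t * ‖∑ i ∈ s, Y i ω‖) ≤
      Real.exp (t ^ 2 * (∑ i ∈ s, (α i) ^ 2) / 2) := by
  induction s using Finset.induction with
  | empty => simp
  | @insert a s hn ih =>
    have hXm : Measurable fun ω => ∑ i ∈ s, Y i ω :=
      Finset.measurable_sum s fun i _ => hmeas i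
    have hfun : (∑ j ∈ s, Y j) = fun ω => ∑ i ∈ s, Y i ω := by
      ext ω
      simp [Finset.sum_apply]
    have hind : IndepFun (fun ω => ∑ i ∈ s, Y i ω) (Y a) ℙ := by
      have h := hindep.indepFun_finset_sum_of_notMem hmeas hn
      rwa [hfun] at h
    have hA : ∀ᵐ ω ∂ℙ, ‖∑ i ∈ s, Y i ω‖ ≤ ∑ i ∈ s, α i := by
      have hall : ∀ᵐ ω ∂ℙ, ∀ i, i ∈ s → ‖Y i ω‖ ≤ α i := by
        rw [ae_all_iff]
        intro i
        exact (hbdd i).mono fun ω h _ => h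
      filter_upwards [hall] with ω h
      exact (norm_sum_le _ _).trans (Finset.sum_le_sum h)
    have hsum : ∀ ω, ∑ i ∈ insert a s, Y i ω = (∑ i ∈ s, Y i ω) + Y a ω := fun ω => by
      rw [Finset.sum_insert hn, add_comm]
    calc ∫ ω, Real.cosh (t * ‖∑ i ∈ insert a s, Y i ω‖)
        = ∫ ω, Real.cosh (t * ‖(∑ i ∈ s, Y i ω) + Y a ω‖) := by simp_rw [hsum]
      _ ≤ (∫ ω, Real.cosh (t * ‖∑ i ∈ s, Y i ω‖)) * Real.cosh (t * α a) :=
          coshStep _ _ hXm (hmeas a) hind (∑ i ∈ s, α i) (α a) t ht hA (hbdd a) (hmean a)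
      _ ≤ Real.exp (t ^ 2 * (∑ i ∈ s, (α i) ^ 2) / 2) * Real.exp ((t * α a) ^ 2 / 2) :=
          mul_le_mul ih (Real.cosh_le_exp_half_sq _) (Real.cosh_pos _).le (Real.exp_nonneg _)
      _ = Real.exp (t ^ 2 * (∑ i ∈ insert a s, (α i) ^ 2) / 2) := by
          rw [← Real.exp_add]
          congr 1
          rw [Finset.sum_insert hn]
          ring

theorem stmt9 {Ω : Type*} [MeasureSpace Ω] [IsProbabilityMeasure (ℙ : Measure Ω)]
    {D m : ℕ} (Y : Fin m → Ω → EuclideanSpace ℝ (Fin D))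
    (hmeas : ∀ i, Measurable (Y i)) (hindep : iIndepFun Y)
    (hmean : ∀ i, ∫ ω, Y i ω = 0)
    (α : Fin m → ℝ) (hbdd : ∀ i, ∀ᵐ ω ∂ℙ, ‖Y i ω‖ ≤ α i)
    (σ2 : ℝ) (hσ2 : σ2 = ∑ i, (α i) ^ 2) (ε : ℝ) (hε : 0 ≤ ε) :
    (ℙ {ω | ε ≤ ‖∑ i, Y i ω‖}) ≤
      ENNReal.ofReal (2 * ((D : ℝ) + 1) * Real.exp (-ε ^ 2 / (8 * σ2))) := by
  have hα0 : ∀ i, 0 ≤ α i := fun i => by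
    obtain ⟨ω, hω⟩ := (hbdd i).exists
    exact (norm_nonneg _).trans hω
  have hD1 : (1 : ℝ) ≤ 2 * ((D : ℝ) + 1) := by
    have : (0:ℝ) ≤ (D:ℝ) := Nat.cast_nonneg D
    linarith
  rcases hε.eq_or_lt with hε0 | hεpos
  · -- ε = 0
    refine le_trans prob_le_one ?_
    rw [← ENNReal.ofReal_one]
    apply ENNReal.ofReal_le_ofReal
    rw [← hε0]
    norm_num
    linarith
  have hσ2nonneg : 0 ≤ σ2 := hσ2 ▸ Finset.sum_nonneg fun i _ => sq_nonneg _
  rcases hσ2nonneg.eq_or_lt with hσ0 | hσpos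
  · -- σ2 = 0 : all the Y i vanish a.e.
    have hai : ∀ i, α i = 0 := by
      intro i
      have hz : ∑ j, (α j) ^ 2 = 0 := by rw [← hσ2, ← hσ0]
      have := (Finset.sum_eq_zero_iff_of_nonneg (fun j _ => sq_nonneg (α j))).1 hz i
        (Finset.mem_univ i)
      exact pow_eq_zero_iff (n := 2) (by norm_num) |>.1 this
    have hS : ∀ᵐ ω ∂ℙ, ∑ i, Y i ω = 0 := by
      have hall : ∀ᵐ ω ∂ℙ, ∀ i, Y i ω = 0 := by
        rw [ae_all_iff]
        intro i
        filter_upwards [hbdd i] with ω h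
        rw [hai i] at h
        exact norm_eq_zero.1 (le_antisymm h (norm_nonneg _))
      filter_upwards [hall] with ω h
      exact Finset.sum_eq_zero fun i _ => h i
    have hzero : ℙ {ω | ε ≤ ‖∑ i, Y i ω‖} = 0 := by
      rw [measure_eq_zero_iff_ae_notMem]
      filter_upwards [hS] with ω h
      simp only [Set.mem_setOf_eq, h, norm_zero, not_le]
      exact hεpos
    rw [hzero]
    exact zero_le
  -- main case
  set t : ℝ := ε / σ2 with ht_def
  have ht : 0 ≤ t := div_nonneg hε hσpos.le
  have hSm : Measurable fun ω => ‖∑ i, Y i ω‖ :=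
    (Finset.measurable_sum univ fun i _ => hmeas i).norm
  have hbS : ∀ᵐ ω ∂ℙ, ‖∑ i, Y i ω‖ ≤ ∑ i, α i := by
    have hall : ∀ᵐ ω ∂ℙ, ∀ i, ‖Y i ω‖ ≤ α i := by
      rw [ae_all_iff]; exact hbdd
    filter_upwards [hall] with ω h
    exact (norm_sum_le _ _).trans (Finset.sum_le_sum fun i _ => h i)
  have hint : Integrable (fun ω => Real.exp (t * ‖∑ i, Y i ω‖)) ℙ := by
    refine Integrable.mono' (integrable_const (Real.exp (t * ∑ i, α i)))
      (Real.continuous_exp.measurable.comp (hSm.const_mul t)).aestronglyMeasurable ?_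
    filter_upwards [hbS] with ω h
    rw [Real.norm_eq_abs, abs_of_pos (Real.exp_pos _), Real.exp_le_exp]
    exact mul_le_mul_of_nonneg_left h ht
  have hintcosh : Integrable (fun ω => 2 * Real.cosh (t * ‖∑ i, Y i ω‖)) ℙ := by
    refine Integrable.mono' (integrable_const (2 * Real.cosh (t * ∑ i, α i)))
      ((Real.continuous_cosh.measurable.comp (hSm.const_mul t)).const_mul 2).aestronglyMeasurable ?_
    filter_upwards [hbS] with ω h
    rw [Real.norm_eq_abs, abs_of_pos (by positivity), mul_le_mul_iff_right₀ (by norm_num : (0:ℝ) < 2),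
      Real.cosh_le_cosh, abs_of_nonneg (mul_nonneg ht (norm_nonneg _)),
      abs_of_nonneg (mul_nonneg ht ((norm_nonneg _).trans h))]
    exact mul_le_mul_of_nonneg_left h ht
  have markov := measure_ge_le_exp_mul_mgf (X := fun ω => ‖∑ i, Y i ω‖) (μ := ℙ) ε ht hint
  have hmgf : mgf (fun ω => ‖∑ i, Y i ω‖) ℙ t ≤ 2 * Real.exp (t ^ 2 * σ2 / 2) := by
    have h2 : ∀ ω, Real.exp (t * ‖∑ i, Y i ω‖) ≤ 2 * Real.cosh (t * ‖∑ i, Y i ω‖) := by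
      intro ω
      rw [Real.cosh_eq]
      have := (Real.exp_pos (-(t * ‖∑ i, Y i ω‖))).le
      linarith
    calc mgf (fun ω => ‖∑ i, Y i ω‖) ℙ t
        = ∫ ω, Real.exp (t * ‖∑ i, Y i ω‖) := rfl
      _ ≤ ∫ ω, 2 * Real.cosh (t * ‖∑ i, Y i ω‖) :=
          integral_mono_ae hint hintcosh (Filter.Eventually.of_forall h2)
      _ = 2 * ∫ ω, Real.cosh (t * ‖∑ i, Y i ω‖) := integral_const_mul 2 _
      _ ≤ 2 * Real.exp (t ^ 2 * σ2 / 2) := by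
          have := coshSumBound Y hmeas hindep hmean α hbdd t ht Finset.univ
          rw [hσ2]
          linarith
  have hreal : (ℙ {ω | ε ≤ ‖∑ i, Y i ω‖}).toReal ≤
      2 * ((D : ℝ) + 1) * Real.exp (-ε ^ 2 / (8 * σ2)) := by
    refine markov.trans ?_
    calc Real.exp (-t * ε) * mgf (fun ω => ‖∑ i, Y i ω‖) ℙ t
        ≤ Real.exp (-t * ε) * (2 * Real.exp (t ^ 2 * σ2 / 2)) :=
          mul_le_mul_of_nonneg_left hmgf (Real.exp_nonneg _)
      _ = 2 * Real.exp (-ε ^ 2 / (2 * σ2)) := by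
          rw [show Real.exp (-t * ε) * (2 * Real.exp (t ^ 2 * σ2 / 2))
              = 2 * (Real.exp (-t * ε) * Real.exp (t ^ 2 * σ2 / 2)) from by ring,
            ← Real.exp_add]
          congr 1
          rw [ht_def]
          field_simp
          ring
      _ ≤ 2 * ((D : ℝ) + 1) * Real.exp (-ε ^ 2 / (8 * σ2)) := by
          have hexp : Real.exp (-ε ^ 2 / (2 * σ2)) ≤ Real.exp (-ε ^ 2 / (8 * σ2)) := by
            rw [Real.exp_le_exp]
            rw [div_le_div_iff₀ (by linarith) (by linarith)]
            nlinarith [sq_nonneg ε]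
          calc 2 * Real.exp (-ε ^ 2 / (2 * σ2)) ≤ 2 * Real.exp (-ε ^ 2 / (8 * σ2)) := by
                linarith
            _ ≤ 2 * ((D : ℝ) + 1) * Real.exp (-ε ^ 2 / (8 * σ2)) := by
                have := Real.exp_nonneg (-ε ^ 2 / (8 * σ2))
                nlinarith [Nat.cast_nonneg (α := ℝ) D]
  exact (ENNReal.le_ofReal_iff_toReal_le (measure_ne_top _ _) (by positivity)).2 hreal
end

section
/- For the vectors λ(d, D) = (1/(d+2))·(1,…,1,0,…,0) ∈ ℝ^D with d ones, and for any nonnegative integer k ≤ D with k ≠ d, ‖λ(k,D) − λ(d,D)‖ ≥ ‖λ(d,D) − λ(d+1,D)‖ = √((d+1)(d+4))/((d+2)(d+3)). -/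
/-- The vector with `d` entries equal to `1/(d+2)` followed by `D - d` zeros. -/
noncomputable def lamVec (d D : ℕ) : EuclideanSpace ℝ (Fin D) :=
  WithLp.toLp 2 (fun i : Fin D => if (i : ℕ) < d then 1 / ((d : ℝ) + 2) else 0)

lemma sum_aux13 (m M D : ℕ) (hmM : m ≤ M) (hMD : M ≤ D) (a b : ℝ) :
    ∑ j ∈ Finset.range D, ((if j < m then a else 0) - (if j < M then b else 0))^2
      = m*(a-b)^2 + (M-m)*b^2 := by
  rw [Finset.range_eq_Ico, ← Finset.sum_Ico_consecutive _ (Nat.zero_le M) hMD,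
      ← Finset.sum_Ico_consecutive _ (Nat.zero_le m) hmM]
  have h1 : ∑ j ∈ Finset.Ico 0 m, ((if j < m then a else 0) - (if j < M then b else 0))^2
      = m*(a-b)^2 := by
    have : ∀ j ∈ Finset.Ico 0 m,
        ((if j < m then a else 0) - (if j < M then b else 0))^2 = (a-b)^2 := by
      intro j hj
      simp only [Finset.mem_Ico] at hj
      rw [if_pos hj.2, if_pos (lt_of_lt_of_le hj.2 hmM)]
    rw [Finset.sum_congr rfl this, Finset.sum_const, Nat.card_Ico, nsmul_eq_mul, Nat.sub_zero]
  have h2 : ∑ j ∈ Finset.Ico m M, ((if j < m then a else 0) - (if j < M then b else 0))^2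
      = (M-m)*b^2 := by
    have : ∀ j ∈ Finset.Ico m M,
        ((if j < m then a else 0) - (if j < M then b else 0))^2 = b^2 := by
      intro j hj
      simp only [Finset.mem_Ico] at hj
      rw [if_neg (not_lt.2 hj.1), if_pos hj.2]
      ring
    rw [Finset.sum_congr rfl this, Finset.sum_const, Nat.card_Ico, nsmul_eq_mul,
      Nat.cast_sub hmM]
  have h3 : ∑ j ∈ Finset.Ico M D, ((if j < m then a else 0) - (if j < M then b else 0))^2
      = 0 := by
    refine Finset.sum_eq_zero (fun j hj => ?_)
    simp only [Finset.mem_Ico] at hj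
    rw [if_neg (not_lt.2 (le_trans hmM hj.1)), if_neg (not_lt.2 hj.1)]
    ring
  rw [h1, h2, h3]; ring

lemma norm_lam13 (m M D : ℕ) (hmM : m ≤ M) (hMD : M ≤ D) :
    ‖lamVec m D - lamVec M D‖
      = Real.sqrt ((m : ℝ)*(1/((m:ℝ)+2) - 1/((M:ℝ)+2))^2 + ((M:ℝ)-(m:ℝ))*(1/((M:ℝ)+2))^2) := by
  rw [EuclideanSpace.norm_eq]
  congr 1
  have : ∀ i : Fin D, ‖(lamVec m D - lamVec M D) i‖^2
      = ((if (i:ℕ) < m then 1/((m:ℝ)+2) else 0) - (if (i:ℕ) < M then 1/((M:ℝ)+2) else 0))^2 := by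
    intro i
    rw [Real.norm_eq_abs, sq_abs]
    rfl
  rw [Finset.sum_congr rfl (fun i _ => this i), Fin.sum_univ_eq_sum_range
    (fun j => ((if j < m then 1/((m:ℝ)+2) else 0) - (if j < M then 1/((M:ℝ)+2) else 0))^2),
    sum_aux13 m M D hmM hMD]

theorem stmt13 (d k D : ℕ) (hd : 1 ≤ d) (hdD : d + 1 ≤ D) (hkD : k ≤ D) (hkd : k ≠ d) :
    ‖lamVec d D - lamVec (d + 1) D‖ =
        Real.sqrt (((d : ℝ) + 1) * ((d : ℝ) + 4)) / (((d : ℝ) + 2) * ((d : ℝ) + 3)) ∧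
      ‖lamVec d D - lamVec (d + 1) D‖ ≤ ‖lamVec k D - lamVec d D‖ := by
  have hx2 : (0:ℝ) < (d:ℝ) + 2 := by positivity
  have hx3 : (0:ℝ) < (d:ℝ) + 3 := by positivity
  have hsq : Real.sqrt (((d : ℝ) + 1) * ((d : ℝ) + 4)) / (((d : ℝ) + 2) * ((d : ℝ) + 3))
      = Real.sqrt ((((d : ℝ) + 1) * ((d : ℝ) + 4)) / ((((d : ℝ) + 2) * ((d : ℝ) + 3))^2)) := by
    rw [Real.sqrt_div (by positivity), Real.sqrt_sq (by positivity)]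
  have heq : ‖lamVec d D - lamVec (d + 1) D‖ =
      Real.sqrt (((d : ℝ) + 1) * ((d : ℝ) + 4)) / (((d : ℝ) + 2) * ((d : ℝ) + 3)) := by
    rw [norm_lam13 d (d+1) D (Nat.le_succ d) hdD,
      show (((d:ℕ)+1 : ℕ) : ℝ) = (d:ℝ)+1 by push_cast; ring, hsq]
    congr 1
    field_simp
    ring
  refine ⟨heq, ?_⟩
  rw [heq, hsq]
  rcases lt_or_gt_of_ne hkd with hlt | hgt
  · -- k < d
    rw [norm_lam13 k d D hlt.le (le_trans (Nat.le_succ d) hdD)]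
    apply Real.sqrt_le_sqrt
    have hy : (0:ℝ) ≤ (k:ℝ) := Nat.cast_nonneg k
    have hyx : (k:ℝ) + 1 ≤ (d:ℝ) := by exact_mod_cast hlt
    have hy2 : (0:ℝ) < (k:ℝ) + 2 := by positivity
    rw [div_le_iff₀ (by positivity)]
    have key : (((d:ℝ)+1)*((d:ℝ)+4))*(((k:ℝ)+2)^2)
        ≤ ((d:ℝ)-(k:ℝ))*((k:ℝ)*((d:ℝ)-(k:ℝ)) + ((k:ℝ)+2)^2)*(((d:ℝ)+3)^2) := by
      nlinarith [mul_nonneg hy (sub_nonneg.2 hyx), sq_nonneg ((d:ℝ)-(k:ℝ)-1),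
        mul_nonneg (mul_nonneg hy hy) (sub_nonneg.2 hyx),
        mul_nonneg (sub_nonneg.2 hyx) (sub_nonneg.2 hyx),
        mul_nonneg hy (mul_nonneg (sub_nonneg.2 hyx) (sub_nonneg.2 hyx)),
        mul_nonneg (mul_nonneg hy hy) (mul_nonneg (sub_nonneg.2 hyx) (sub_nonneg.2 hyx)),
        mul_nonneg hy hy, sq_nonneg ((d:ℝ)-(k:ℝ)),
        mul_nonneg (mul_nonneg hy (sub_nonneg.2 hyx)) (sub_nonneg.2 hyx)]
    have expand : ((k : ℝ)*(1/((k:ℝ)+2) - 1/((d:ℝ)+2))^2 + ((d:ℝ)-(k:ℝ))*(1/((d:ℝ)+2))^2)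
        * (((d:ℝ)+2)*((d:ℝ)+3))^2
        = (((d:ℝ)-(k:ℝ))*((k:ℝ)*((d:ℝ)-(k:ℝ)) + ((k:ℝ)+2)^2)*(((d:ℝ)+3)^2)) / (((k:ℝ)+2)^2) := by
      field_simp
      ring
    rw [expand, le_div_iff₀ (by positivity)]
    exact key
  · -- k > d
    have hsymm : ‖lamVec k D - lamVec d D‖ = ‖lamVec d D - lamVec k D‖ := by
      rw [← norm_neg]; congr 1; abel
    rw [hsymm, norm_lam13 d k D hgt.le hkD]
    apply Real.sqrt_le_sqrt
    have hx1 : (1:ℝ) ≤ (d:ℝ) := by exact_mod_cast hd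
    have hxy : (d:ℝ) + 1 ≤ (k:ℝ) := by exact_mod_cast hgt
    have hy2 : (0:ℝ) < (k:ℝ) + 2 := by positivity
    rw [div_le_iff₀ (by positivity)]
    have ht1 : (1:ℝ) ≤ (k:ℝ) - (d:ℝ) := by linarith
    have key : (((d:ℝ)+1)*((d:ℝ)+4))*(((k:ℝ)+2)^2)
        ≤ ((k:ℝ)-(d:ℝ))*((d:ℝ)*((k:ℝ)-(d:ℝ)) + ((d:ℝ)+2)^2)*(((d:ℝ)+3)^2) := by
      nlinarith [mul_nonneg (sub_nonneg.2 ht1) (sub_nonneg.2 hx1), sq_nonneg ((k:ℝ)-(d:ℝ)-1),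
        mul_nonneg (mul_nonneg (sub_nonneg.2 ht1) (sub_nonneg.2 ht1)) (sub_nonneg.2 hx1),
        mul_nonneg (sub_nonneg.2 ht1) (by linarith : (0:ℝ) ≤ (d:ℝ)),
        mul_nonneg (mul_nonneg (sub_nonneg.2 ht1) (sub_nonneg.2 hx1)) (by linarith : (0:ℝ) ≤ (d:ℝ))]
    have expand : ((d : ℝ)*(1/((d:ℝ)+2) - 1/((k:ℝ)+2))^2 + ((k:ℝ)-(d:ℝ))*(1/((k:ℝ)+2))^2)
        * (((d:ℝ)+2)*((d:ℝ)+3))^2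
        = (((k:ℝ)-(d:ℝ))*((d:ℝ)*((k:ℝ)-(d:ℝ)) + ((d:ℝ)+2)^2)*(((d:ℝ)+3)^2)) / (((k:ℝ)+2)^2) := by
      field_simp
      ring
    rw [expand, le_div_iff₀ (by positivity)]
    exact key
end

section
/- For all real a > 0, all real k ≥ 1, and all x ∈ [0, 1/a], the function f(x) = (1 − ax)/((1 + ax)(1 + x + ax²)) satisfies f(x)^k ≥ 1 − k(1 + 2a)x. -/
theorem stmt15 (a k x : ℝ) (ha : 0 < a) (hk : 1 ≤ k) (hx : x ∈ Set.Icc 0 (1 / a)) :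
    1 - k * (1 + 2 * a) * x ≤
      ((1 - a * x) / ((1 + a * x) * (1 + x + a * x ^ 2))) ^ k := by
  obtain ⟨hx0, hx1⟩ := hx
  have hax : a * x ≤ 1 := by
    have := (le_div_iff₀ ha).mp hx1
    linarith [this, mul_comm x a ▸ this]
  set f : ℝ := (1 - a * x) / ((1 + a * x) * (1 + x + a * x ^ 2)) with hf
  have h1 : (0:ℝ) < 1 + a * x := by positivity
  have h2 : (0:ℝ) < 1 + x + a * x ^ 2 := by positivity
  have hD : (0:ℝ) < (1 + a * x) * (1 + x + a * x ^ 2) := mul_pos h1 h2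
  have hf0 : 0 ≤ f := div_nonneg (by linarith) hD.le
  have hf1 : f ≤ 1 := by
    rw [hf, div_le_one hD]; nlinarith [mul_nonneg ha.le hx0, mul_nonneg (mul_nonneg ha.le hx0) hx0, mul_nonneg (mul_nonneg (mul_nonneg ha.le ha.le) hx0) (mul_nonneg hx0 hx0)]
  have key : 1 - f ≤ (1 + 2 * a) * x := by
    rw [hf, sub_div' hD.ne']
    rw [div_le_iff₀ hD]
    nlinarith [mul_nonneg hx0 hx0, mul_nonneg ha.le (mul_nonneg hx0 hx0),
      mul_nonneg (mul_nonneg ha.le ha.le) (mul_nonneg hx0 hx0),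
      mul_nonneg ha.le (mul_nonneg (mul_nonneg hx0 hx0) hx0),
      mul_nonneg (mul_nonneg ha.le ha.le) (mul_nonneg (mul_nonneg hx0 hx0) hx0),
      mul_nonneg (mul_nonneg ha.le ha.le) (mul_nonneg (mul_nonneg hx0 hx0) (mul_nonneg hx0 hx0)),
      mul_nonneg (mul_nonneg (mul_nonneg ha.le ha.le) ha.le) (mul_nonneg (mul_nonneg hx0 hx0) (mul_nonneg hx0 hx0))]
  have bern : 1 + k * (f - 1) ≤ f ^ k := by
    have := one_add_mul_self_le_rpow_one_add (s := f - 1) (by linarith) hk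
    simpa using this
  have hk0 : (0:ℝ) < k := by linarith
  calc 1 - k * (1 + 2 * a) * x ≤ 1 + k * (f - 1) := by nlinarith
  _ ≤ f ^ k := bern
end

section
/- Let M ⊂ ℝ^D be a smooth compact embedded manifold with reach τ, and let γ : [0, r̃] → M be a unit-speed geodesic from x to y of length r̃ with ‖γ̈(t)‖ ≤ 1/τ for all t, and let r = ‖x − y‖. Then: (1) r̃ − r̃²/(2τ) ≤ r ≤ r̃; (2) ‖y − (x + r̃ γ̇(0))‖ ≤ r̃²/(2τ); (3) if r ≤ τ/2, then r̃/τ ≤ 1 − √(1 − 2r/τ); and (4) if r ≤ (√2 − 1)τ, then r̃ ≤ r + r²/τ and ‖y − (x + r̃ γ̇(0))‖ ≤ r²/τ. -/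
set_option maxHeartbeats 1600000 in
theorem stmt18 {D : ℕ} (τ rt : ℝ) (hτ : 0 < τ) (hrt : 0 < rt)
    (γ γ' γ'' : ℝ → EuclideanSpace ℝ (Fin D))
    (hd1 : ∀ t ∈ Set.Icc (0 : ℝ) rt, HasDerivAt γ (γ' t) t)
    (hd2 : ∀ t ∈ Set.Icc (0 : ℝ) rt, HasDerivAt γ' (γ'' t) t)
    (hunit : ∀ t ∈ Set.Icc (0 : ℝ) rt, ‖γ' t‖ = 1)
    (hacc : ∀ t ∈ Set.Icc (0 : ℝ) rt, ‖γ'' t‖ ≤ 1 / τ)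
    (x y : EuclideanSpace ℝ (Fin D)) (hx : x = γ 0) (hy : y = γ rt)
    (r : ℝ) (hr : r = ‖x - y‖) :
    (rt - rt ^ 2 / (2 * τ) ≤ r ∧ r ≤ rt) ∧
      ‖y - (x + rt • γ' 0)‖ ≤ rt ^ 2 / (2 * τ) ∧
      (r ≤ τ / 2 → rt ≤ τ → rt / τ ≤ 1 - Real.sqrt (1 - 2 * r / τ)) ∧
      (r ≤ (Real.sqrt 2 - 1) * τ → rt ≤ τ →
        rt ≤ r + r ^ 2 / τ ∧ ‖y - (x + rt • γ' 0)‖ ≤ r ^ 2 / τ) := by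
  have hrt0 : (0:ℝ) ≤ rt := hrt.le
  have hmem0 : (0:ℝ) ∈ Set.Icc (0:ℝ) rt := ⟨le_refl _, hrt0⟩
  have hmemrt : rt ∈ Set.Icc (0:ℝ) rt := ⟨hrt0, le_refl _⟩
  have hr0 : 0 ≤ r := hr ▸ norm_nonneg _
  -- Lipschitz bound on γ'
  have hlip : ∀ t ∈ Set.Icc (0:ℝ) rt, ‖γ' t - γ' 0‖ ≤ (1/τ) * ‖t - 0‖ := by
    intro t ht
    exact Convex.norm_image_sub_le_of_norm_hasDerivWithin_le
      (fun u hu => (hd2 u hu).hasDerivWithinAt)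
      (fun u hu => hacc u hu) (convex_Icc (0:ℝ) rt) hmem0 ht
  -- r ≤ rt
  have hle : r ≤ rt := by
    have h := Convex.norm_image_sub_le_of_norm_hasDerivWithin_le
      (fun u hu => (hd1 u hu).hasDerivWithinAt)
      (fun u hu => le_of_eq (hunit u hu)) (convex_Icc (0:ℝ) rt) hmemrt hmem0
    rw [hr, hx, hy]
    simpa [abs_of_nonneg hrt0] using h
  -- Taylor estimate
  have hfd : ∀ t ∈ Set.Icc (0:ℝ) rt,
      HasDerivAt (fun u => γ u - γ 0 - u • γ' 0) (γ' t - γ' 0) t := by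
    intro t ht
    have h1 := (hd1 t ht).sub_const (γ 0)
    have h2 : HasDerivAt (fun u : ℝ => u • γ' 0) (γ' 0) t := by
      simpa using (hasDerivAt_id t).smul_const (γ' 0)
    exact h1.sub h2
  have htaylor : ∀ t ∈ Set.Icc (0:ℝ) rt,
      ‖γ t - γ 0 - t • γ' 0‖ ≤ t^2/(2*τ) := by
    have hB : ∀ t : ℝ, HasDerivAt (fun u : ℝ => u^2/(2*τ)) (t/τ) t := by
      intro t
      have h1 : HasDerivAt (fun u : ℝ => u^2) (2*t) t := by
        simpa [mul_comm] using hasDerivAt_pow 2 t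
      have h2 := h1.div_const (2*τ)
      rw [← mul_div_mul_left t τ (two_ne_zero' ℝ)]
      exact h2
    have := image_norm_le_of_norm_deriv_right_le_deriv_boundary
      (f := fun u => γ u - γ 0 - u • γ' 0) (a := 0) (b := rt)
      (f' := fun t => γ' t - γ' 0)
      (fun t ht => ((hfd t ht).continuousAt).continuousWithinAt)
      (fun t ht => (hfd t (Set.mem_Icc_of_Ico ht)).hasDerivWithinAt)
      (by simp)
      hB
      (fun t ht => by
        have := hlip t (Set.mem_Icc_of_Ico ht)
        have ht0 : (0:ℝ) ≤ t := ht.1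
        rw [sub_zero, Real.norm_eq_abs, abs_of_nonneg ht0] at this
        calc ‖γ' t - γ' 0‖ ≤ (1/τ) * t := this
          _ = t/τ := by ring)
    exact this
  have hT : ‖y - (x + rt • γ' 0)‖ ≤ rt^2/(2*τ) := by
    have := htaylor rt hmemrt
    rw [hx, hy, sub_add_eq_sub_sub]
    exact this
  -- lower bound
  have hlow : rt - rt^2/(2*τ) ≤ r := by
    have h1 : ‖rt • γ' 0‖ = rt := by
      rw [norm_smul, hunit 0 hmem0, Real.norm_eq_abs, abs_of_nonneg hrt0, mul_one]
    have h2 : ‖rt • γ' 0‖ - ‖y - x‖ ≤ ‖y - (x + rt • γ' 0)‖ := by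
      have h := norm_sub_norm_le (rt • γ' 0) (y - x)
      have e : rt • γ' 0 - (y - x) = -(y - (x + rt • γ' 0)) := by abel
      rw [e, norm_neg] at h
      linarith [h]
    have h3 : ‖y - x‖ = r := by rw [hr, norm_sub_rev]
    rw [h1, h3] at h2
    linarith
  refine ⟨⟨hlow, hle⟩, hT, ?_, ?_⟩
  · -- part 3
    intro _ hrtτ
    have key : 1 - 2*r/τ ≤ (1 - rt/τ)^2 := by
      have h : rt - r ≤ rt^2/(2*τ) := by linarith
      have h' : (rt - r) * (2*τ) ≤ rt^2 := by
        rw [← le_div_iff₀ (by positivity)]; exact h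
      have expand : (1 - rt/τ)^2 - (1 - 2*r/τ) = (rt^2 - (rt - r)*(2*τ))/τ^2 := by
        field_simp; ring
      have hpos : 0 ≤ (rt^2 - (rt - r)*(2*τ))/τ^2 :=
        div_nonneg (by linarith) (sq_nonneg τ)
      linarith
    have hs : Real.sqrt (1 - 2*r/τ) ≤ 1 - rt/τ := by
      calc Real.sqrt (1 - 2*r/τ) ≤ Real.sqrt ((1 - rt/τ)^2) := Real.sqrt_le_sqrt key
        _ = 1 - rt/τ := by
          rw [Real.sqrt_sq (by rw [sub_nonneg, div_le_one hτ]; exact hrtτ)]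
    linarith
  · -- part 4
    intro h4 hrtτ
    have hsqrt2 : Real.sqrt 2 ^ 2 = 2 := Real.sq_sqrt (by norm_num)
    have hsqrt2nn : (1:ℝ) ≤ Real.sqrt 2 := by nlinarith [Real.sqrt_nonneg 2]
    obtain ⟨s, hsdef⟩ : ∃ s : ℝ, s = r / τ := ⟨_, rfl⟩
    have hs0 : 0 ≤ s := by rw [hsdef]; positivity
    have hs1 : s ≤ Real.sqrt 2 - 1 := by
      rw [hsdef, div_le_iff₀ hτ]; linarith [h4]
    have hrs : r = s * τ := by rw [hsdef, div_mul_cancel₀ _ hτ.ne']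
    -- part 3 conclusion (re-derive)
    have key : 1 - 2*r/τ ≤ (1 - rt/τ)^2 := by
      have h : rt - r ≤ rt^2/(2*τ) := by linarith
      have h' : (rt - r) * (2*τ) ≤ rt^2 := by
        rw [← le_div_iff₀ (by positivity)]; exact h
      have expand : (1 - rt/τ)^2 - (1 - 2*r/τ) = (rt^2 - (rt - r)*(2*τ))/τ^2 := by
        field_simp; ring
      have hpos : 0 ≤ (rt^2 - (rt - r)*(2*τ))/τ^2 :=
        div_nonneg (by linarith) (sq_nonneg τ)
      linarith
    have hs3 : Real.sqrt (1 - 2*r/τ) ≤ 1 - rt/τ :=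
      calc Real.sqrt (1 - 2*r/τ) ≤ Real.sqrt ((1 - rt/τ)^2) := Real.sqrt_le_sqrt key
        _ = 1 - rt/τ := Real.sqrt_sq (by rw [sub_nonneg, div_le_one hτ]; exact hrtτ)
    -- lower bound on sqrt
    have hsl : 1 - s - s^2 ≤ Real.sqrt (1 - 2*r/τ) := by
      rcases le_or_gt (1 - s - s^2) 0 with h | h
      · exact h.trans (Real.sqrt_nonneg _)
      · have h2s : 2*r/τ = 2*s := by rw [hsdef]; ring
        rw [h2s]
        rw [show (1:ℝ) - s - s^2 = Real.sqrt ((1-s-s^2)^2) from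
          (Real.sqrt_sq h.le).symm]
        apply Real.sqrt_le_sqrt
        have h7 : (s+1)^2 ≤ 2 := by nlinarith [hs1, hsqrt2, hs0, Real.sqrt_nonneg 2]
        have hq : 0 ≤ s^2 * (1 - 2*s - s^2) :=
          mul_nonneg (sq_nonneg s) (by nlinarith [h7])
        have hid : (1-s-s^2)^2 + s^2*(1 - 2*s - s^2) = 1 - 2*s := by ring
        linarith
    have hmain : rt ≤ r + r^2/τ := by
      have h5 : rt/τ ≤ s + s^2 := by linarith
      have h6 : rt ≤ (s + s^2) * τ := by
        rw [← div_le_iff₀ hτ]; exact h5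
      have e2 : r^2/τ = s^2*τ := by rw [div_eq_iff hτ.ne', hrs]; ring
      have : r + r^2/τ = (s + s^2) * τ := by rw [e2]; rw [hrs]; ring
      linarith
    refine ⟨hmain, ?_⟩
    have hrt2 : rt^2 ≤ 2*r^2 := by
      have hsr : rt ≤ Real.sqrt 2 * r := by
        have e1 : r^2/τ = s * r := by rw [div_eq_iff hτ.ne', hrs]; ring
        have : r + r^2/τ ≤ Real.sqrt 2 * r := by
          rw [e1]; nlinarith [hs1, hr0]
        linarith
      nlinarith [hr0, Real.sqrt_nonneg 2, hsqrt2, hrt0]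
    have hfin : rt^2/(2*τ) ≤ r^2/τ := by
      rw [div_le_div_iff₀ (by positivity) hτ]
      nlinarith [hrt2, hτ]
    linarith
end

section
/- Let (M, d) be a metric space and n a positive integer. Define d∘ on M^n by d∘(x, y) = min over permutations σ ∈ S_n of d_{M^n}(x, σ·y), where σ·y permutes coordinates and d_{M^n} is (say) the ℓ² product metric. Then d∘ is a metric on the quotient of M^n by coordinate permutations, and when M = ℝ with the Euclidean product metric, if the entries of x and y are both sorted in decreasing order then d∘(x, y) = ‖x − y‖. -/
open Finset

/-- The permutation-matching distance on `M^n`, using the ℓ² product metric. -/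
noncomputable def permDist {M : Type*} [MetricSpace M] {n : ℕ} (x y : Fin n → M) : ℝ :=
  ⨅ σ : Equiv.Perm (Fin n), Real.sqrt (∑ i, dist (x i) (y (σ i)) ^ 2)

lemma permDist_bddBelow {M : Type*} [MetricSpace M] {n : ℕ} (x y : Fin n → M) :
    BddBelow (Set.range fun σ : Equiv.Perm (Fin n) =>
      Real.sqrt (∑ i, dist (x i) (y (σ i)) ^ 2)) :=
  ⟨0, by rintro _ ⟨σ, rfl⟩; exact Real.sqrt_nonneg _⟩

lemma permDist_le {M : Type*} [MetricSpace M] {n : ℕ} (x y : Fin n → M)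
    (σ : Equiv.Perm (Fin n)) :
    permDist x y ≤ Real.sqrt (∑ i, dist (x i) (y (σ i)) ^ 2) :=
  ciInf_le (permDist_bddBelow x y) σ

lemma permDist_nonneg {M : Type*} [MetricSpace M] {n : ℕ} (x y : Fin n → M) :
    0 ≤ permDist x y :=
  le_ciInf fun _ => Real.sqrt_nonneg _

lemma sqrt_sum_sq_eq_norm {n : ℕ} (v : Fin n → ℝ) :
    Real.sqrt (∑ i, v i ^ 2) = ‖(EuclideanSpace.equiv (Fin n) ℝ).symm v‖ := by
  rw [EuclideanSpace.norm_eq]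
  simp [Real.norm_eq_abs, sq_abs]

lemma minkowski_aux {n : ℕ} (c a b : Fin n → ℝ) (hc : ∀ i, 0 ≤ c i)
    (h : ∀ i, c i ≤ a i + b i) :
    Real.sqrt (∑ i, c i ^ 2) ≤ Real.sqrt (∑ i, a i ^ 2) + Real.sqrt (∑ i, b i ^ 2) := by
  calc Real.sqrt (∑ i, c i ^ 2) ≤ Real.sqrt (∑ i, (a i + b i) ^ 2) := by
        apply Real.sqrt_le_sqrt
        exact Finset.sum_le_sum fun i _ => pow_le_pow_left₀ (hc i) (h i) 2
    _ = ‖(EuclideanSpace.equiv (Fin n) ℝ).symm (a + b)‖ := sqrt_sum_sq_eq_norm _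
    _ = ‖(EuclideanSpace.equiv (Fin n) ℝ).symm a + (EuclideanSpace.equiv (Fin n) ℝ).symm b‖ := by
        rw [map_add]
    _ ≤ ‖(EuclideanSpace.equiv (Fin n) ℝ).symm a‖ + ‖(EuclideanSpace.equiv (Fin n) ℝ).symm b‖ :=
        norm_add_le _ _
    _ = Real.sqrt (∑ i, a i ^ 2) + Real.sqrt (∑ i, b i ^ 2) := by
        rw [sqrt_sum_sq_eq_norm, sqrt_sum_sq_eq_norm]

theorem stmt19 {M : Type*} [MetricSpace M] {n : ℕ} (hn : 0 < n) :
    ((∀ x : Fin n → M, permDist x x = 0) ∧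
      (∀ x y : Fin n → M, 0 ≤ permDist x y) ∧
      (∀ x y : Fin n → M, permDist x y = permDist y x) ∧
      (∀ x y z : Fin n → M, permDist x z ≤ permDist x y + permDist y z)) ∧
      (∀ x y : Fin n → ℝ, Antitone x → Antitone y →
        permDist x y = Real.sqrt (∑ i, (x i - y i) ^ 2)) := by
  have hsym : ∀ x y : Fin n → M, ∀ σ : Equiv.Perm (Fin n),
      (∑ i, dist (x i) (y (σ i)) ^ 2) = ∑ i, dist (y i) (x (σ⁻¹ i)) ^ 2 := by
    intro x y σ
    rw [← Equiv.sum_comp σ (fun i => dist (y i) (x (σ⁻¹ i)) ^ 2)]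
    simp [dist_comm]
  constructor
  · refine ⟨?_, permDist_nonneg, ?_, ?_⟩
    · intro x
      refine le_antisymm ?_ (permDist_nonneg x x)
      have := permDist_le x x 1
      simpa using this
    · intro x y
      apply le_antisymm
      · refine le_ciInf fun σ => ?_
        have := permDist_le x y σ⁻¹
        rw [hsym x y σ⁻¹, inv_inv] at this
        exact this
      · refine le_ciInf fun σ => ?_
        have := permDist_le y x σ⁻¹
        rw [hsym y x σ⁻¹, inv_inv] at this
        exact this
    · intro x y z
      refine le_ciInf_add_ciInf fun σ τ => ?_
      refine le_trans (permDist_le x z (σ.trans τ)) ?_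
      have := minkowski_aux (fun i => dist (x i) (z (τ (σ i))))
        (fun i => dist (x i) (y (σ i))) (fun i => dist (y (σ i)) (z (τ (σ i))))
        (fun i => dist_nonneg) (fun i => dist_triangle _ _ _)
      refine this.trans ?_
      have : (∑ i, dist (y (σ i)) (z (τ (σ i))) ^ 2) = ∑ i, dist (y i) (z (τ i)) ^ 2 :=
        Equiv.sum_comp σ (fun i => dist (y i) (z (τ i)) ^ 2)
      rw [this]
  · intro x y hx hy
    have hmono : Monovary x y := hx.monovary hy
    have key : ∀ σ : Equiv.Perm (Fin n),
        (∑ i, (x i - y i) ^ 2) ≤ ∑ i, (x i - y (σ i)) ^ 2 := by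
      intro σ
      have h1 : (∑ i, x i * y (σ i)) ≤ ∑ i, x i * y i := by
        simpa [smul_eq_mul] using hmono.sum_smul_comp_perm_le_sum_smul (σ := σ)
      have h2 : (∑ i : Fin n, y (σ i) ^ 2) = ∑ i, y i ^ 2 :=
        Equiv.sum_comp σ (fun i => y i ^ 2)
      have e1 : (∑ i, (x i - y i) ^ 2)
          = ∑ i, (x i ^ 2 + y i ^ 2) - 2 * ∑ i, x i * y i := by
        rw [Finset.mul_sum, ← Finset.sum_sub_distrib]
        exact Finset.sum_congr rfl fun i _ => by ring
      have e2 : (∑ i, (x i - y (σ i)) ^ 2)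
          = ∑ i, (x i ^ 2 + y (σ i) ^ 2) - 2 * ∑ i, x i * y (σ i) := by
        rw [Finset.mul_sum, ← Finset.sum_sub_distrib]
        exact Finset.sum_congr rfl fun i _ => by ring
      have e3 : (∑ i, (x i ^ 2 + y (σ i) ^ 2)) = ∑ i, (x i ^ 2 + y i ^ 2) := by
        rw [Finset.sum_add_distrib, Finset.sum_add_distrib, h2]
      rw [e1, e2, e3]
      linarith
    apply le_antisymm
    · have := permDist_le x y 1
      simpa [Real.dist_eq, sq_abs] using this
    · refine le_ciInf fun σ => ?_
      apply Real.sqrt_le_sqrt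
      simpa [Real.dist_eq, sq_abs] using key σ
end
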